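/- Let m ≥ 1 and n ≥ 2 be natural numbers. Then φ(m+1, n) = Σ_{p=2m}^{n−2} C(n, p) · φ(m, p), where C(n,p) denotes the binomial coefficient. (In particular, when n < 2(m+1) both sides vanish.) -/

import Mathlib

open Finset

/-- `phi m n` is the number of ways to place `n` distinct objects into `m` numbered urns
so that each urn receives at least two objects, i.e. the number of functions
`f : Fin n → Fin m` all of whose fibers have at least two elements. -/
def phi (m n : ℕ) : ℕ :=
  Fintype.card {f : Fin n → Fin m // ∀ i : Fin m, 2 ≤ (Finset.univ.filter fun x => f x = i).card}

lemma fiber_card_comp {α β : Type*} [Fintype α] [Fintype β] [DecidableEq α] [DecidableEq β]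
    {m : ℕ} (e : α ≃ β) (f : β → Fin m) (i : Fin m) :
    (univ.filter fun x => f (e x) = i).card = (univ.filter fun y => f y = i).card := by
  apply Finset.card_bij' (fun x _ => e x) (fun y _ => e.symm y) <;> simp

lemma phi_eq_card (m : ℕ) (α : Type*) [Fintype α] [DecidableEq α] :
    Fintype.card {f : α → Fin m // ∀ i : Fin m, 2 ≤ (univ.filter fun x => f x = i).card}
      = phi m (Fintype.card α) := by
  apply Fintype.card_congr
  exact (Equiv.arrowCongr (Fintype.equivFin α).symm (Equiv.refl (Fin m))).symm.subtypeEquiv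
    (fun f => by
      constructor <;> intro h i <;>
        · have := h i
          have h2 := fiber_card_comp (Fintype.equivFin α).symm f i
          simp only [Equiv.subtypeEquiv, Equiv.arrowCongr, Equiv.symm, Equiv.coe_fn_mk,
            Equiv.coe_refl, Equiv.refl, id, Function.comp] at *
          convert this using 2 <;> exact (by simpa [eq_comm] using h2))



lemma phi_eq_zero_of_lt {m p : ℕ} (h : p < 2 * m) : phi m p = 0 := by
  rw [phi, Fintype.card_eq_zero_iff]
  constructor
  rintro ⟨f, hf⟩
  have h1 : (univ : Finset (Fin p)).card
      = ∑ i : Fin m, (univ.filter fun x => f x = i).card :=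
    Finset.card_eq_sum_card_fiberwise (fun x _ => mem_univ _)
  have h2 : ∑ i : Fin m, 2 ≤ ∑ i : Fin m, (univ.filter fun x => f x = i).card :=
    Finset.sum_le_sum (fun i _ => hf i)
  simp at h1 h2
  omega

lemma fiber_subtype_card {n : ℕ} (A : Finset (Fin n)) (q : Fin n → Prop) [DecidablePred q]
    (hq : ∀ x, q x → x ∈ A) :
    (univ.filter fun x : {y // y ∈ A} => q ↑x).card = (univ.filter q).card := by
  refine Finset.card_bij' (fun (x : {y // y ∈ A}) _ => (x : Fin n))
    (fun (x : Fin n) hx => (⟨x, hq x (by simpa using hx)⟩ : {y // y ∈ A})) ?_ ?_ ?_ ?_ <;> simp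

lemma core {m n : ℕ} (hn : 2 ≤ n) (A : Finset (Fin n)) (hA : A.card ≤ n - 2) :
    ((univ.filter fun f : Fin n → Fin (m + 1) =>
        ∀ i : Fin (m + 1), 2 ≤ (univ.filter fun x => f x = i).card).filter
      (fun f => univ.filter (fun x => f x ≠ Fin.last m) = A)).card = phi m A.card := by
  have hAn : A.card ≤ n := le_trans hA (Nat.sub_le _ _)
  rw [← Fintype.card_coe A, ← phi_eq_card, Fintype.card_subtype]
  refine Finset.card_bij'
    (fun f hf x => Fin.castPred (f ↑x) (by
      have hf2 := (mem_filter.mp hf).2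
      have hx : (x : Fin n) ∈ univ.filter (fun y => f y ≠ Fin.last m) := by
        rw [hf2]; exact x.2
      exact (mem_filter.mp hx).2))
    (fun g hg x => if h : x ∈ A then Fin.castSucc (g ⟨x, h⟩) else Fin.last m)
    ?_ ?_ ?_ ?_
  · -- hi : lands in target
    intro f hf
    have hf1 := mem_filter.mp (mem_filter.mp hf).1
    have hf2 := (mem_filter.mp hf).2
    simp only [mem_filter, mem_univ, true_and] at hf1 ⊢
    intro j
    have key : (univ.filter fun x : {y // y ∈ A} => f ↑x = Fin.castSucc j).card
        = (univ.filter fun x => f x = Fin.castSucc j).card := by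
      refine fiber_subtype_card A (fun y => f y = Fin.castSucc j) ?_
      intro x hx
      rw [← hf2]
      simp only [mem_filter, mem_univ, true_and, hx]
      exact fun h => absurd h (Fin.castSucc_lt_last j).ne
    simp only [Fin.castPred_eq_iff_eq_castSucc]
    rw [key]
    exact hf1 _
  · -- hj : lands in source
    intro g hg
    simp only [mem_filter, mem_univ, true_and] at hg ⊢
    have hsig : (univ.filter fun x : Fin n =>
        (if h : x ∈ A then Fin.castSucc (g ⟨x, h⟩) else Fin.last m) ≠ Fin.last m) = A := by
      ext x
      by_cases h : x ∈ A
      · simp [h, (Fin.castSucc_lt_last (g ⟨x, h⟩)).ne]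
      · simp [h]
    refine ⟨?_, hsig⟩
    intro i
    refine Fin.lastCases ?_ ?_ i
    · have : (univ.filter fun x : Fin n =>
          (if h : x ∈ A then Fin.castSucc (g ⟨x, h⟩) else Fin.last m) = Fin.last m) = Aᶜ := by
        ext x
        by_cases h : x ∈ A
        · simp [h, (Fin.castSucc_lt_last (g ⟨x, h⟩)).ne]
        · simp [h]
      rw [this, Finset.card_compl]
      simp only [Fintype.card_fin]
      omega
    · intro j
      have key : (univ.filter fun x : {y // y ∈ A} =>
          (if h : (x : Fin n) ∈ A then Fin.castSucc (g ⟨x, h⟩) else Fin.last m) = Fin.castSucc j).card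
          = (univ.filter fun x : Fin n =>
          (if h : x ∈ A then Fin.castSucc (g ⟨x, h⟩) else Fin.last m) = Fin.castSucc j).card := by
        refine fiber_subtype_card A
          (fun y => (if h : y ∈ A then Fin.castSucc (g ⟨y, h⟩) else Fin.last m) = Fin.castSucc j) ?_
        intro x hx
        by_cases h : x ∈ A
        · exact h
        · rw [dif_neg h] at hx
          exact absurd hx.symm (Fin.castSucc_lt_last j).ne
      rw [← key]
      rw [show (univ.filter fun x : {y // y ∈ A} =>
          (if h : (x : Fin n) ∈ A then Fin.castSucc (g ⟨x, h⟩) else Fin.last m) = Fin.castSucc j)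
          = (univ.filter fun x : {y // y ∈ A} => g x = j) from
        Finset.filter_congr fun x _ => by
          rw [dif_pos x.2]
          simp [Fin.castSucc_inj]]
      exact hg _
  · -- left inverse
    intro f hf
    have hf2 := (mem_filter.mp hf).2
    funext x
    dsimp only
    by_cases h : x ∈ A
    · rw [dif_pos h, Fin.castSucc_castPred]
    · rw [dif_neg h]
      rw [← hf2] at h
      simp only [mem_filter, mem_univ, true_and, not_not] at h
      exact h.symm
  · -- right inverse
    intro g hg
    funext x
    dsimp only
    simp only [dif_pos x.2]
    rw [Fin.castPred_castSucc]

theorem phi_succ_eq_sum (m n : ℕ) (hm : 1 ≤ m) (hn : 2 ≤ n) :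
    phi (m + 1) n = ∑ p ∈ Finset.Icc (2 * m) (n - 2), n.choose p * phi m p := by
  classical
  rw [phi, Fintype.card_subtype]
  rw [Finset.card_eq_sum_card_fiberwise
    (f := fun f : Fin n → Fin (m + 1) => univ.filter fun x => f x ≠ Fin.last m)
    (t := (univ : Finset (Finset (Fin n)))) (fun x _ => mem_univ _)]
  have step1 : ∀ A : Finset (Fin n),
      ((univ.filter fun f : Fin n → Fin (m + 1) =>
        ∀ i : Fin (m + 1), 2 ≤ (univ.filter fun x => f x = i).card).filter
        (fun f => univ.filter (fun x => f x ≠ Fin.last m) = A)).card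
      = if A.card ≤ n - 2 then phi m A.card else 0 := by
    intro A
    by_cases h : A.card ≤ n - 2
    · rw [if_pos h]; exact core hn A h
    · rw [if_neg h, Finset.card_eq_zero, Finset.filter_eq_empty_iff]
      intro f hf
      simp only [mem_filter, mem_univ, true_and] at hf
      intro hA
      have h1 := hf (Fin.last m)
      have h2 : (univ.filter fun x => f x = Fin.last m).card
          + (univ.filter fun x => ¬(f x = Fin.last m)).card = n := by
        rw [Finset.card_filter_add_card_filter_not]
        simp
      rw [show (univ.filter fun x => ¬(f x = Fin.last m)) = A from hA] at h2
      omega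
  simp only [step1]
  rw [← Finset.powerset_univ, Finset.sum_powerset]
  have step2 : ∀ j ∈ Finset.range ((univ : Finset (Fin n)).card + 1),
      ∑ A ∈ Finset.powersetCard j (univ : Finset (Fin n)),
        (if A.card ≤ n - 2 then phi m A.card else 0)
      = n.choose j * (if j ≤ n - 2 then phi m j else 0) := by
    intro j _
    rw [Finset.sum_congr rfl (fun A hA => by
      rw [(Finset.mem_powersetCard.mp hA).2]), Finset.sum_const, Finset.card_powersetCard]
    simp [mul_comm]
  rw [Finset.sum_congr rfl step2]
  rw [show (univ : Finset (Fin n)).card = n by simp]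
  rw [show (∑ p ∈ Finset.Icc (2 * m) (n - 2), n.choose p * phi m p)
      = ∑ p ∈ Finset.Icc (2 * m) (n - 2), n.choose p * (if p ≤ n - 2 then phi m p else 0) from
    Finset.sum_congr rfl fun p hp => by rw [if_pos (Finset.mem_Icc.mp hp).2]]
  symm
  apply Finset.sum_subset
  · intro p hp
    have := (Finset.mem_Icc.mp hp).2
    simp only [Finset.mem_range]
    omega
  · intro p _ hp
    rw [Finset.mem_Icc, not_and_or] at hp
    rcases hp with h | h
    · rw [phi_eq_zero_of_lt (by omega)]
      simp
    · rw [if_neg (by omega)]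
      simp
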